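/- (Corollary 2, NO filtering) Let x be a sequence of length m and y a sequence of length n over a linearly ordered alphabet Σ, let q be an integer with 0 < q < m, and let j be an index with j + m ≤ n. If x ≈ y[j…j+m−1], then φ^q_x[i] = φ^q_y[j+i] for all 0 ≤ i < m − q. -/
import Mathlib


variable {α : Type*} [LinearOrder α]

/-- β_x(i,j) = 1 if x[i] ≥ x[j], 0 otherwise. -/
def beta {m : ℕ} (x : Fin m → α) (i j : Fin m) : ℕ :=
  if x j ≤ x i then 1 else 0

/-- The rank function ρ_x. -/
def rankFn {m : ℕ} (x : Fin m → α) (i : Fin m) : ℕ :=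
  (Finset.univ.filter fun j => x j < x i ∨ (x j = x i ∧ j < i)).card

/-- Order isomorphism of two sequences of the same length. -/
def OrderIsom {m : ℕ} (x y : Fin m → α) : Prop :=
  ∀ i j : Fin m, x i ≤ x j ↔ y i ≤ y j

/-- The q-neighborhood-ranking value χ^q_x[i]. -/
def chi {m : ℕ} (x : Fin m → α) (q i : ℕ) (h : i + q < m) : ℕ :=
  ∑ j : Fin q, beta x ⟨i, by omega⟩ ⟨i + (j.val + 1), by have := j.isLt; omega⟩ *
    2 ^ (q - (j.val + 1))

/-- The q-neighborhood-ordering value φ^q_x[i]. -/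
def phi {m : ℕ} (x : Fin m → α) (q i : ℕ) (h : i + q < m) : ℕ :=
  ∑ k : Fin q, chi x (k.val + 1) (i + q - (k.val + 1)) (by have := k.isLt; omega) *
    2 ^ ((k.val + 1) * k.val / 2)

lemma chi_congr {n : ℕ} (y : Fin n → α) (q b1 b2 : ℕ) (e : b1 = b2)
    (h1 : b1 + q < n) (h2 : b2 + q < n) : chi y q b1 h1 = chi y q b2 h2 := by
  subst e; rfl

/-- Corollary 2 (NO filtering): if `x ≈ y[j…j+m−1]` then `φ^q_x[i] = φ^q_y[j+i]`
for all `0 ≤ i < m − q`. -/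
theorem phi_filter {m n : ℕ} (x : Fin m → α) (y : Fin n → α) (q : ℕ)
    (hq : 0 < q) (hqm : q < m) (j : ℕ) (hj : j + m ≤ n)
    (h : OrderIsom x (fun l : Fin m => y ⟨j + l.val, by have := l.isLt; omega⟩)) :
    ∀ i : ℕ, ∀ hi : i + q < m, phi x q i hi = phi y q (j + i) (by omega) := by
  intro i hi
  have hchi : ∀ q' i' : ℕ, ∀ h' : i' + q' < m,
      chi x q' i' h' = chi y q' (j + i') (by omega) := by
    intro q' i' h'
    unfold chi
    refine Finset.sum_congr rfl fun l _ => ?_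
    congr 1
    unfold beta
    have := h ⟨i' + (l.val + 1), by have := l.isLt; omega⟩ ⟨i', by omega⟩
    simp only at this
    have e : (⟨j + (i' + (l.val + 1)), by have := l.isLt; omega⟩ : Fin n)
        = ⟨j + i' + (l.val + 1), by have := l.isLt; omega⟩ := Fin.ext (by simp; omega)
    rw [e] at this
    simp [this]
  unfold phi
  refine Finset.sum_congr rfl fun k _ => ?_
  congr 1
  have hk := k.isLt
  rw [hchi (k.val+1) (i + q - (k.val+1)) (by omega)]
  exact chi_congr y _ _ _ (by omega) _ _
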